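/- Let U, V ∈ ℝ^{X×Y} and suppose μ : T → ℝ satisfies the market-clearing condition: μ_{xy} = n_x·p_x(y;U) for all x ∈ X, y ∈ Y₀, and μ_{xy} = m_y·q_y(x;V) for all x ∈ X₀, y ∈ Y. For each x ∈ X let Y*_x(ε) denote the P_x-almost surely unique maximizer over Y₀ of Û_{xy} + ε_y (unique a.s. by absolute continuity of P_x), and for each y ∈ Y let X*_y(η) denote the Q_y-almost surely unique maximizer over X₀ of V̂_{xy} + η_x. Then −G*(μ) − H*(μ) = Σ_{x∈X} n_x ∫ ε_{Y*_x(ε)} dP_x(ε) + Σ_{y∈Y} m_y ∫ η_{X*_y(η)} dQ_y(η): the unobserved part of the social surplus equals the sum of the expected error terms of the chosen alternatives. -/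

import Mathlib

open MeasureTheory

noncomputable section

variable {X Y Z : Type*} [Fintype X] [Fintype Y] [Fintype Z] [DecidableEq Z]
  [Nonempty X] [Nonempty Y]

/-- Extension `Û` of systematic utilities: the outside option `y₀` (encoded `none`)
gets utility `0`. -/
def Uhat (U : X → Y → ℝ) (x : X) (o : Option Y) : ℝ := o.elim 0 (U x)

/-- Extension `V̂` of systematic utilities: the outside option `x₀` (encoded `none`)
gets utility `0`. -/
def Vhat (V : X → Y → ℝ) (y : Y) (o : Option X) : ℝ := o.elim 0 (fun x => V x y)

/-- Worker-side welfare `G(U) = Σ_x n_x ∫ max_{y ∈ Y₀} (Û_{xy} + ε_y) dP_x(ε)`. -/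
def Gfun (n : X → ℝ) (P : X → Measure (Option Y → ℝ)) (U : X → Y → ℝ) : ℝ :=
  ∑ x, n x * ∫ ε, (Finset.univ.sup' Finset.univ_nonempty
    fun y : Option Y => Uhat U x y + ε y) ∂(P x)

/-- Slot-side welfare `H(V) = Σ_y m_y ∫ max_{x ∈ X₀} (V̂_{xy} + η_x) dQ_y(η)`. -/
def Hfun (m : Y → ℝ) (Q : Y → Measure (Option X → ℝ)) (V : X → Y → ℝ) : ℝ :=
  ∑ y, m y * ∫ η, (Finset.univ.sup' Finset.univ_nonempty
    fun x : Option X => Vhat V y x + η x) ∂(Q y)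

/-- Choice probability `p_x(y; U)` of a type-`x` worker choosing alternative `y ∈ Y₀`. -/
def cp (P : X → Measure (Option Y → ℝ)) (U : X → Y → ℝ) (x : X) (y : Option Y) : ℝ :=
  ((P x) {ε | ∀ y', y' ≠ y → Uhat U x y' + ε y' < Uhat U x y + ε y}).toReal

/-- Choice probability `q_y(x; V)` of a type-`y` slot choosing alternative `x ∈ X₀`. -/
def cq (Q : Y → Measure (Option X → ℝ)) (V : X → Y → ℝ) (y : Y) (x : Option X) : ℝ :=
  ((Q y) {η | ∀ x', x' ≠ x → Vhat V y x' + η x' < Vhat V y x + η x}).toReal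

/-- Population constraint of a matching `μ : T → ℝ` (with `T = X₀ × Y₀ ∖ {(x₀,y₀)}`,
encoded as `μ : Option X → Option Y → ℝ` with the `(none, none)` entry irrelevant). -/
def PopCon (n : X → ℝ) (m : Y → ℝ) (μ : Option X → Option Y → ℝ) : Prop :=
  (∀ x, ∑ o : Option Y, μ (some x) o = n x) ∧ (∀ y, ∑ o : Option X, μ o (some y) = m y)

/-- Total mass of matches in region `z`. -/
def regionMass (zm : Y → Z) (μ : Option X → Option Y → ℝ) (z : Z) : ℝ :=
  ∑ x : X, ∑ y : Y, if zm y = z then μ (some x) (some y) else 0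

/-- Regional constraint: each region's mass lies between its floor and ceiling. -/
def RegionCon (zm : Y → Z) (ol ou : Z → ℝ) (μ : Option X → Option Y → ℝ) : Prop :=
  ∀ z, ol z ≤ regionMass zm μ z ∧ regionMass zm μ z ≤ ou z

/-- Market clearing: `μ_{xy} = n_x p_x(y;U) = m_y q_y(x;V)` (with the obvious one-sided
conditions for the outside options). -/
def MarketClearing (n : X → ℝ) (m : Y → ℝ) (P : X → Measure (Option Y → ℝ))
    (Q : Y → Measure (Option X → ℝ)) (μ : Option X → Option Y → ℝ)
    (U V : X → Y → ℝ) : Prop :=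
  (∀ x y, μ (some x) (some y) = n x * cp P U x (some y) ∧
    μ (some x) (some y) = m y * cq Q V y (some x)) ∧
  (∀ x, μ (some x) none = n x * cp P U x none) ∧
  (∀ y, μ none (some y) = m y * cq Q V y none)

/-- Aggregate equilibrium with regional constraints. -/
def IsAE (n : X → ℝ) (m : Y → ℝ) (P : X → Measure (Option Y → ℝ))
    (Q : Y → Measure (Option X → ℝ)) (Φ : X → Y → ℝ) (zm : Y → Z) (ol ou : Z → ℝ)
    (μ : Option X → Option Y → ℝ) (U V : X → Y → ℝ) (w : Z → ℝ) : Prop :=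
  PopCon n m μ ∧
  (∀ x y, U x y + V x y ≥ Φ x y - w (zm y)) ∧
  MarketClearing n m P Q μ U V ∧
  RegionCon zm ol ou μ

/-- Efficient aggregate equilibrium: an AE satisfying complementary slackness. -/
def IsEAE (n : X → ℝ) (m : Y → ℝ) (P : X → Measure (Option Y → ℝ))
    (Q : Y → Measure (Option X → ℝ)) (Φ : X → Y → ℝ) (zm : Y → Z) (ol ou : Z → ℝ)
    (μ : Option X → Option Y → ℝ) (U V : X → Y → ℝ) (w : Z → ℝ) : Prop :=
  IsAE n m P Q Φ zm ol ou μ U V w ∧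
  ∀ z, (0 < w z → regionMass zm μ z = ou z) ∧ (w z < 0 → regionMass zm μ z = ol z)

/-- Feasibility for problem (D). -/
def FeasD (Φ : X → Y → ℝ) (zm : Y → Z) (U V : X → Y → ℝ) (wb wl : Z → ℝ) : Prop :=
  (∀ z, 0 ≤ wb z) ∧ (∀ z, 0 ≤ wl z) ∧
  ∀ x y, U x y + V x y ≥ Φ x y - wb (zm y) + wl (zm y)

/-- Objective of problem (D). -/
def objD (n : X → ℝ) (m : Y → ℝ) (P : X → Measure (Option Y → ℝ))
    (Q : Y → Measure (Option X → ℝ)) (ol ou : Z → ℝ)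
    (U V : X → Y → ℝ) (wb wl : Z → ℝ) : ℝ :=
  Gfun n P U + Hfun m Q V + ∑ z, ou z * wb z - ∑ z, ol z * wl z

/-- Optimality for problem (D): feasible and minimizing the objective among
feasible points. -/
def IsOptD (n : X → ℝ) (m : Y → ℝ) (P : X → Measure (Option Y → ℝ))
    (Q : Y → Measure (Option X → ℝ)) (Φ : X → Y → ℝ) (zm : Y → Z) (ol ou : Z → ℝ)
    (U V : X → Y → ℝ) (wb wl : Z → ℝ) : Prop :=
  FeasD Φ zm U V wb wl ∧
  ∀ U' V' wb' wl', FeasD Φ zm U' V' wb' wl' →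
    objD n m P Q ol ou U V wb wl ≤ objD n m P Q ol ou U' V' wb' wl'

/-- Legendre–Fenchel conjugate `G*(μ)`. -/
def Gstar (n : X → ℝ) (P : X → Measure (Option Y → ℝ))
    (μ : Option X → Option Y → ℝ) : ℝ :=
  ⨆ U : X → Y → ℝ, (∑ x, ∑ y, μ (some x) (some y) * U x y - Gfun n P U)

/-- Legendre–Fenchel conjugate `H*(μ)`. -/
def Hstar (m : Y → ℝ) (Q : Y → Measure (Option X → ℝ))
    (μ : Option X → Option Y → ℝ) : ℝ :=
  ⨆ V : X → Y → ℝ, (∑ x, ∑ y, μ (some x) (some y) * V x y - Hfun m Q V)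

/-- Social welfare `W(μ) = Σ_{x,y} μ_{xy} Φ_{xy} − G*(μ) − H*(μ)`. -/
def SW (n : X → ℝ) (m : Y → ℝ) (P : X → Measure (Option Y → ℝ))
    (Q : Y → Measure (Option X → ℝ)) (Φ : X → Y → ℝ)
    (μ : Option X → Option Y → ℝ) : ℝ :=
  ∑ x, ∑ y, μ (some x) (some y) * Φ x y - Gstar n P μ - Hstar m Q μ

/-- A feasible matching: nonnegative, satisfying population and regional constraints. -/
def FeasMatch (n : X → ℝ) (m : Y → ℝ) (zm : Y → Z) (ol ou : Z → ℝ)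
    (μ : Option X → Option Y → ℝ) : Prop :=
  (∀ x y, 0 ≤ μ (some x) (some y)) ∧ (∀ x, 0 ≤ μ (some x) none) ∧
  (∀ y, 0 ≤ μ none (some y)) ∧ PopCon n m μ ∧ RegionCon zm ol ou μ

section Helper
set_option linter.unusedSectionVars false

variable {α : Type*} [Fintype α] [Nonempty α]

lemma hyperplane_null [DecidableEq α] (a b : α) (hab : a ≠ b) (c : ℝ) :
    (volume : Measure (α → ℝ)) {ε | ε a - ε b = c} = 0 := by
  set L : (α → ℝ) →ₗ[ℝ] ℝ :=
    (LinearMap.proj a : (α → ℝ) →ₗ[ℝ] ℝ) - (LinearMap.proj b : (α → ℝ) →ₗ[ℝ] ℝ) with hL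
  have hLapp : ∀ ε : α → ℝ, L ε = ε a - ε b := fun ε => rfl
  set p : α → ℝ := Pi.single a c with hp
  have hLp : L p = c := by
    simp [hLapp, hp, Pi.single_apply, hab, Ne.symm hab]
  set s : AffineSubspace ℝ (α → ℝ) := AffineSubspace.mk' p (LinearMap.ker L) with hs
  have hset : {ε : α → ℝ | ε a - ε b = c} = (s : Set (α → ℝ)) := by
    ext ε
    simp only [Set.mem_setOf_eq, hs, SetLike.mem_coe, AffineSubspace.mem_mk',
      LinearMap.mem_ker, vsub_eq_sub, map_sub, hLp, hLapp]
    have hpa : p a = c := by simp [hp]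
    have hpb : p b = 0 := by simp [hp, Pi.single_apply, Ne.symm hab]
    simp only [Pi.sub_apply, hpa, hpb]
    constructor
    · intro h; linarith
    · intro h; linarith
  rw [hset]
  apply Measure.addHaar_affineSubspace
  intro htop
  have : (LinearMap.ker L) = ⊤ := by
    rw [← AffineSubspace.direction_mk' p (LinearMap.ker L), ← hs, htop,
      AffineSubspace.direction_top]
  have h1 : L (Pi.single a 1) = 0 := by
    rw [← LinearMap.mem_ker, this]; trivial
  rw [hLapp] at h1
  simp [Pi.single_apply, hab, Ne.symm hab] at h1

/-- Strict-argmax region for alternative `a`. -/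
def Aset (f : α → ℝ) (a : α) : Set (α → ℝ) := {ε | ∀ b, b ≠ a → f b + ε b < f a + ε a}

lemma measurableSet_Aset (f : α → ℝ) (a : α) : MeasurableSet (Aset f a) := by
  have : Aset f a = ⋂ b, ⋂ (_ : b ≠ a), {ε : α → ℝ | f b + ε b < f a + ε a} := by
    ext ε; simp [Aset]
  rw [this]
  refine MeasurableSet.iInter fun b => MeasurableSet.iInter fun _ => ?_
  exact measurableSet_lt (by measurability) (by measurability)

lemma Aset_disjoint (f : α → ℝ) {a b : α} (hab : a ≠ b) {ε : α → ℝ}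
    (ha : ε ∈ Aset f a) (hb : ε ∈ Aset f b) : False :=
  lt_asymm (ha b (Ne.symm hab)) (hb a hab)

lemma ae_exists_Aset (ρ : Measure (α → ℝ)) (hac : ρ ≪ (volume : Measure (α → ℝ)))
    (f : α → ℝ) : ∀ᵐ ε ∂ρ, ∃ a, ε ∈ Aset f a := by
  classical
  rw [MeasureTheory.ae_iff]
  refine measure_mono_null (t := ⋃ a, ⋃ b, ⋃ (_ : a ≠ b),
    {ε : α → ℝ | ε a - ε b = f b - f a}) ?_ ?_
  · intro ε hε
    simp only [Set.mem_setOf_eq, not_exists] at hε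
    obtain ⟨a, _, ha⟩ := Finset.exists_max_image Finset.univ (fun b => f b + ε b)
      ⟨Classical.arbitrary α, Finset.mem_univ _⟩
    have := hε a
    simp only [Aset, Set.mem_setOf_eq, not_forall] at this
    obtain ⟨b, hba, hble⟩ := this
    have h1 : f b + ε b ≤ f a + ε a := ha b (Finset.mem_univ b)
    have h2 : f b + ε b = f a + ε a := le_antisymm h1 (not_lt.mp hble)
    refine Set.mem_iUnion.mpr ⟨a, Set.mem_iUnion.mpr ⟨b, Set.mem_iUnion.mpr
      ⟨Ne.symm hba, ?_⟩⟩⟩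
    simp only [Set.mem_setOf_eq]; linarith
  · apply hac
    refine measure_iUnion_null_iff.mpr fun a => measure_iUnion_null_iff.mpr fun b => ?_
    by_cases hab : a ≠ b
    · have : (⋃ (_ : a ≠ b), {ε : α → ℝ | ε a - ε b = f b - f a})
          = {ε : α → ℝ | ε a - ε b = f b - f a} := by
        ext ε; simp [hab]
      rw [this]
      exact hyperplane_null a b hab _
    · simp [hab]

lemma ae_sel (ρ : Measure (α → ℝ)) (hac : ρ ≪ (volume : Measure (α → ℝ)))
    (f : α → ℝ) (s : (α → ℝ) → α)
    (hs : ∀ᵐ ε ∂ρ, ∀ b, f b + ε b ≤ f (s ε) + ε (s ε)) :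
    ∀ᵐ ε ∂ρ, ∃ a, ε ∈ Aset f a ∧ s ε = a := by
  filter_upwards [hs, ae_exists_Aset ρ hac f] with ε hmax ⟨a, ha⟩
  refine ⟨a, ha, ?_⟩
  by_contra hne
  exact absurd (hmax a) (not_le.mpr (ha _ hne))


lemma measurable_supfun (f : α → ℝ) :
    Measurable (fun ε : α → ℝ => Finset.univ.sup' Finset.univ_nonempty
      fun a => f a + ε a) := by
  have h : (fun ε : α → ℝ => Finset.univ.sup' Finset.univ_nonempty fun a => f a + ε a)
      = Finset.univ.sup' Finset.univ_nonempty fun a => (fun ε : α → ℝ => f a + ε a) := by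
    ext ε; rw [Finset.sup'_apply]
  rw [h]
  exact Finset.measurable_sup' _ fun a _ => measurable_const.add (measurable_pi_apply a)

lemma abs_supfun_le (f : α → ℝ) (ε : α → ℝ) :
    |Finset.univ.sup' Finset.univ_nonempty fun a => f a + ε a|
      ≤ (Finset.univ.sup' Finset.univ_nonempty fun a => |f a|)
        + Finset.univ.sup' Finset.univ_nonempty fun a => |ε a| := by
  rw [abs_le]
  constructor
  · obtain ⟨a0⟩ := (inferInstance : Nonempty α)
    have h1 : f a0 + ε a0 ≤ Finset.univ.sup' Finset.univ_nonempty fun a => f a + ε a :=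
      Finset.le_sup' (fun a => f a + ε a) (Finset.mem_univ a0)
    have h2 : |f a0| ≤ Finset.univ.sup' Finset.univ_nonempty fun a => |f a| :=
      Finset.le_sup' (fun a => |f a|) (Finset.mem_univ a0)
    have h3 : |ε a0| ≤ Finset.univ.sup' Finset.univ_nonempty fun a => |ε a| :=
      Finset.le_sup' (fun a => |ε a|) (Finset.mem_univ a0)
    have h4 : -(f a0 + ε a0) ≤ |f a0| + |ε a0| := by
      have := abs_nonneg (f a0); have := neg_abs_le (f a0); have := neg_abs_le (ε a0); linarith
    linarith
  · apply Finset.sup'_le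
    intro a _
    have h2 : |f a| ≤ Finset.univ.sup' Finset.univ_nonempty fun b => |f b| :=
      Finset.le_sup' (fun b => |f b|) (Finset.mem_univ a)
    have h3 : |ε a| ≤ Finset.univ.sup' Finset.univ_nonempty fun b => |ε b| :=
      Finset.le_sup' (fun b => |ε b|) (Finset.mem_univ a)
    have := le_abs_self (f a); have := le_abs_self (ε a)
    linarith

lemma integrable_supfun (ρ : Measure (α → ℝ)) [IsProbabilityMeasure ρ]
    (hint : Integrable (fun ε : α → ℝ => Finset.univ.sup' Finset.univ_nonempty
      fun a => |ε a|) ρ) (f : α → ℝ) :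
    Integrable (fun ε : α → ℝ => Finset.univ.sup' Finset.univ_nonempty
      fun a => f a + ε a) ρ := by
  refine Integrable.mono' (g := fun ε => (Finset.univ.sup' Finset.univ_nonempty
      fun a => |f a|) + Finset.univ.sup' Finset.univ_nonempty fun a => |ε a|)
    ((integrable_const _).add hint) (measurable_supfun f).aestronglyMeasurable ?_
  filter_upwards with ε
  exact abs_supfun_le f ε

lemma integrable_indsum (ρ : Measure (α → ℝ)) [IsProbabilityMeasure ρ]
    (hint : Integrable (fun ε : α → ℝ => Finset.univ.sup' Finset.univ_nonempty
      fun a => |ε a|) ρ) (f : α → ℝ) :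
    Integrable (fun ε : α → ℝ => ∑ a, (Aset f a).indicator (fun ε' => ε' a) ε) ρ := by
  apply integrable_finset_sum
  intro a _
  refine Integrable.mono' (g := fun ε => Finset.univ.sup' Finset.univ_nonempty
      fun b => |ε b|) hint
    (((measurable_pi_apply a).indicator (measurableSet_Aset f a)).aestronglyMeasurable) ?_
  filter_upwards with ε
  rw [Real.norm_eq_abs]
  by_cases h : ε ∈ Aset f a
  · rw [Set.indicator_of_mem h]
    exact Finset.le_sup' (fun b => |ε b|) (Finset.mem_univ a)
  · rw [Set.indicator_of_notMem h, abs_zero]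
    obtain ⟨a0⟩ := (inferInstance : Nonempty α)
    exact le_trans (abs_nonneg (ε a0)) (Finset.le_sup' (fun b => |ε b|) (Finset.mem_univ a0))

/-- Main per-type decomposition of the expected maximum. -/
lemma side_main (ρ : Measure (α → ℝ)) [IsProbabilityMeasure ρ]
    (hac : ρ ≪ (volume : Measure (α → ℝ)))
    (hint : Integrable (fun ε : α → ℝ => Finset.univ.sup' Finset.univ_nonempty
      fun a => |ε a|) ρ)
    (f : α → ℝ) (s : (α → ℝ) → α)
    (hs : ∀ᵐ ε ∂ρ, ∀ b, f b + ε b ≤ f (s ε) + ε (s ε)) :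
    ∫ ε, (Finset.univ.sup' Finset.univ_nonempty fun a => f a + ε a) ∂ρ
      = ∑ a, f a * (ρ (Aset f a)).toReal + ∫ ε, ε (s ε) ∂ρ := by
  classical
  set g1 : (α → ℝ) → ℝ := fun ε => ∑ a, (Aset f a).indicator (fun _ => f a) ε with hg1
  set g2 : (α → ℝ) → ℝ := fun ε => ∑ a, (Aset f a).indicator (fun ε' => ε' a) ε with hg2
  have key : ∀ᵐ ε ∂ρ, ε ∈ Aset f (s ε) ∧ s ε = s ε := by
    filter_upwards [ae_sel ρ hac f s hs] with ε ⟨a, ha, hsa⟩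
    exact ⟨hsa ▸ ha, rfl⟩
  have hsum : ∀ (ε : α → ℝ) (a : α), ε ∈ Aset f a →
      ∀ F : α → (α → ℝ) → ℝ, (∑ b, (Aset f b).indicator (F b) ε) = F a ε := by
    intro ε a ha F
    refine (Finset.sum_eq_single_of_mem a (Finset.mem_univ a) ?_).trans
      (Set.indicator_of_mem ha _)
    intro b _ hba
    exact Set.indicator_of_notMem (fun hb => Aset_disjoint f hba hb ha) _
  have e1 : (fun ε : α → ℝ => Finset.univ.sup' Finset.univ_nonempty fun a => f a + ε a)
      =ᵐ[ρ] fun ε => g1 ε + g2 ε := by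
    filter_upwards [ae_exists_Aset ρ hac f] with ε ⟨a, ha⟩
    have h1 : g1 ε = f a := hsum ε a ha fun b _ => f b
    have h2 : g2 ε = ε a := hsum ε a ha fun b ε' => ε' b
    rw [h1, h2]
    apply le_antisymm
    · apply Finset.sup'_le
      intro b _
      rcases eq_or_ne b a with rfl | hba
      · exact le_rfl
      · exact le_of_lt (ha b hba)
    · exact Finset.le_sup' (fun b => f b + ε b) (Finset.mem_univ a)
  have e2 : (fun ε : α → ℝ => ε (s ε)) =ᵐ[ρ] g2 := by
    filter_upwards [ae_sel ρ hac f s hs] with ε ⟨a, ha, hsa⟩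
    rw [hsa]
    exact (hsum ε a ha fun b ε' => ε' b).symm
  have hg1int : Integrable g1 ρ := integrable_finset_sum _ fun a _ =>
    (integrable_const (f a)).indicator (measurableSet_Aset f a)
  have hg2int : Integrable g2 ρ := integrable_indsum ρ hint f
  rw [integral_congr_ae e1, integral_congr_ae e2,
    integral_add hg1int hg2int]
  congr 1
  have h := integral_finset_sum (μ := ρ) Finset.univ
    (f := fun a (ε : α → ℝ) => (Aset f a).indicator (fun _ => f a) ε)
    (fun a _ => (integrable_const (f a)).indicator (measurableSet_Aset f a))
  refine h.trans (Finset.sum_congr rfl fun a _ => ?_)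
  rw [integral_indicator_const (f a) (measurableSet_Aset f a), smul_eq_mul, mul_comm]; rfl

/-- Gradient inequality for the expected maximum. -/
lemma side_grad (ρ : Measure (α → ℝ)) [IsProbabilityMeasure ρ]
    (hac : ρ ≪ (volume : Measure (α → ℝ)))
    (hint : Integrable (fun ε : α → ℝ => Finset.univ.sup' Finset.univ_nonempty
      fun a => |ε a|) ρ)
    (f f' : α → ℝ) :
    ∑ a, (f' a - f a) * (ρ (Aset f a)).toReal
      + ∫ ε, (Finset.univ.sup' Finset.univ_nonempty fun a => f a + ε a) ∂ρ
      ≤ ∫ ε, (Finset.univ.sup' Finset.univ_nonempty fun a => f' a + ε a) ∂ρ := by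
  classical
  set g3 : (α → ℝ) → ℝ := fun ε => ∑ a, (Aset f a).indicator (fun _ => f' a - f a) ε with hg3
  have hg3int : Integrable g3 ρ := integrable_finset_sum _ fun a _ =>
    (integrable_const _).indicator (measurableSet_Aset f a)
  have hmono : (fun ε => g3 ε + Finset.univ.sup' Finset.univ_nonempty fun a => f a + ε a)
      ≤ᵐ[ρ] fun ε => Finset.univ.sup' Finset.univ_nonempty fun a => f' a + ε a := by
    filter_upwards [ae_exists_Aset ρ hac f] with ε ⟨a, ha⟩
    have h1 : g3 ε = f' a - f a := by
      refine (Finset.sum_eq_single_of_mem a (Finset.mem_univ a) ?_).trans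
        (Set.indicator_of_mem ha _)
      intro b _ hba
      exact Set.indicator_of_notMem (fun hb => Aset_disjoint f hba hb ha) _
    have h2 : (Finset.univ.sup' Finset.univ_nonempty fun b => f b + ε b) = f a + ε a := by
      apply le_antisymm
      · apply Finset.sup'_le
        intro b _
        rcases eq_or_ne b a with rfl | hba
        · exact le_rfl
        · exact le_of_lt (ha b hba)
      · exact Finset.le_sup' (fun b => f b + ε b) (Finset.mem_univ a)
    have h3 : f' a + ε a ≤ Finset.univ.sup' Finset.univ_nonempty fun b => f' b + ε b :=
      Finset.le_sup' (fun b => f' b + ε b) (Finset.mem_univ a)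
    rw [h1, h2]
    linarith
  have hle := integral_mono_ae (hg3int.add (integrable_supfun ρ hint f))
    (integrable_supfun ρ hint f') hmono
  have hsplit : ∫ ε, (g3 ε + (Finset.univ.sup' Finset.univ_nonempty
        fun a => f a + ε a)) ∂ρ
      = (∫ ε, g3 ε ∂ρ) + ∫ ε, (Finset.univ.sup' Finset.univ_nonempty
        fun a => f a + ε a) ∂ρ :=
    integral_add hg3int (integrable_supfun ρ hint f)
  have hg3val : ∫ ε, g3 ε ∂ρ = ∑ a, (f' a - f a) * (ρ (Aset f a)).toReal := by
    have h := integral_finset_sum (μ := ρ) Finset.univ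
      (f := fun a (ε : α → ℝ) => (Aset f a).indicator (fun _ => f' a - f a) ε)
      (fun a _ => (integrable_const _).indicator (measurableSet_Aset f a))
    refine h.trans (Finset.sum_congr rfl fun a _ => ?_)
    rw [integral_indicator_const _ (measurableSet_Aset f a), smul_eq_mul, mul_comm]; rfl
  calc ∑ a, (f' a - f a) * (ρ (Aset f a)).toReal
        + ∫ ε, (Finset.univ.sup' Finset.univ_nonempty fun a => f a + ε a) ∂ρ
      = ∫ ε, (g3 ε + (Finset.univ.sup' Finset.univ_nonempty fun a => f a + ε a)) ∂ρ := by
        rw [hsplit, hg3val]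
    _ ≤ ∫ ε, (Finset.univ.sup' Finset.univ_nonempty fun a => f' a + ε a) ∂ρ := hle

end Helper

lemma ciSup_eq_of_isMax {κ : Sort*} [Nonempty κ] (S : κ → ℝ) (k : κ)
    (h : ∀ k', S k' ≤ S k) : (⨆ k', S k') = S k :=
  le_antisymm (ciSup_le h)
    (le_ciSup ⟨S k, by rintro _ ⟨k', rfl⟩; exact h k'⟩ k)

section GSide
variable {X Y : Type*} [Fintype X] [Fintype Y] [Nonempty X] [Nonempty Y]

lemma cp_eq_Aset (P : X → Measure (Option Y → ℝ)) (U : X → Y → ℝ) (x : X) (a : Option Y) :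
    cp P U x a = ((P x) (Aset (Uhat U x) a)).toReal := rfl

lemma Gside_sum (n : X → ℝ) (P : X → Measure (Option Y → ℝ)) (U W : X → Y → ℝ)
    (μ : Option X → Option Y → ℝ)
    (hμ1 : ∀ x y, μ (some x) (some y) = n x * cp P U x (some y)) (x : X) :
    n x * ∑ a : Option Y, Uhat W x a * ((P x) (Aset (Uhat U x) a)).toReal
      = ∑ y, μ (some x) (some y) * W x y := by
  rw [Fintype.sum_option]
  have h0 : Uhat W x none * ((P x) (Aset (Uhat U x) none)).toReal = 0 := by
    simp [Uhat]
  rw [h0, zero_add, Finset.mul_sum]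
  refine Finset.sum_congr rfl fun y _ => ?_
  rw [hμ1 x y, cp_eq_Aset]
  show n x * (W x y * ((P x) (Aset (Uhat U x) (some y))).toReal)
    = n x * ((P x) (Aset (Uhat U x) (some y))).toReal * W x y
  ring

lemma Gstar_side (n : X → ℝ) (hn : ∀ x, 0 ≤ n x) (P : X → Measure (Option Y → ℝ))
    [∀ x, IsProbabilityMeasure (P x)]
    (hPac : ∀ x, P x ≪ (volume : Measure (Option Y → ℝ)))
    (hPint : ∀ x, Integrable (fun ε : Option Y → ℝ =>
      Finset.univ.sup' Finset.univ_nonempty fun a => |ε a|) (P x))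
    (U : X → Y → ℝ) (μ : Option X → Option Y → ℝ)
    (hμ1 : ∀ x y, μ (some x) (some y) = n x * cp P U x (some y))
    (Ystar : X → (Option Y → ℝ) → Option Y)
    (hYstar : ∀ x, ∀ᵐ ε ∂(P x), ∀ y : Option Y,
      Uhat U x y + ε y ≤ Uhat U x (Ystar x ε) + ε (Ystar x ε)) :
    -Gstar n P μ = ∑ x, n x * ∫ ε, ε (Ystar x ε) ∂(P x) := by
  have key : ∀ W : X → Y → ℝ,
      (∑ x, ∑ y, μ (some x) (some y) * W x y) - Gfun n P W
        ≤ (∑ x, ∑ y, μ (some x) (some y) * U x y) - Gfun n P U := by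
    intro W
    show (∑ x, ∑ y, μ (some x) (some y) * W x y)
        - ∑ x, n x * ∫ ε, (Finset.univ.sup' Finset.univ_nonempty
          fun a : Option Y => Uhat W x a + ε a) ∂(P x)
      ≤ (∑ x, ∑ y, μ (some x) (some y) * U x y)
        - ∑ x, n x * ∫ ε, (Finset.univ.sup' Finset.univ_nonempty
          fun a : Option Y => Uhat U x a + ε a) ∂(P x)
    rw [← Finset.sum_sub_distrib, ← Finset.sum_sub_distrib]
    refine Finset.sum_le_sum fun x _ => ?_
    have hg := side_grad (P x) (hPac x) (hPint x) (Uhat U x) (Uhat W x)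
    have hscaled := mul_le_mul_of_nonneg_left hg (hn x)
    rw [mul_add] at hscaled
    have h1 : n x * ∑ a : Option Y, (Uhat W x a - Uhat U x a)
        * ((P x) (Aset (Uhat U x) a)).toReal
        = (∑ y, μ (some x) (some y) * W x y) - ∑ y, μ (some x) (some y) * U x y := by
      have hW := Gside_sum n P U W μ hμ1 x
      have hU := Gside_sum n P U U μ hμ1 x
      rw [← hW, ← hU, ← mul_sub, ← Finset.sum_sub_distrib]
      congr 1
      refine Finset.sum_congr rfl fun a _ => ?_
      ring
    linarith
  have hGstar : Gstar n P μ
      = (∑ x, ∑ y, μ (some x) (some y) * U x y) - Gfun n P U :=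
    ciSup_eq_of_isMax
      (fun W => (∑ x, ∑ y, μ (some x) (some y) * W x y) - Gfun n P W) U key
  rw [hGstar, neg_sub]
  have hGfun : Gfun n P U = ∑ x, ((∑ y, μ (some x) (some y) * U x y)
      + n x * ∫ ε, ε (Ystar x ε) ∂(P x)) := by
    refine Finset.sum_congr rfl fun x _ => ?_
    rw [side_main (P x) (hPac x) (hPint x) (Uhat U x) (Ystar x) (hYstar x),
      mul_add, Gside_sum n P U U μ hμ1 x]
  rw [hGfun, Finset.sum_add_distrib]
  ring

end GSide

lemma Hstar_eq_Gstar {X Y : Type*} [Fintype X] [Fintype Y] [Nonempty X] [Nonempty Y]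
    (m : Y → ℝ) (Q : Y → Measure (Option X → ℝ)) (μ : Option X → Option Y → ℝ) :
    Hstar m Q μ = Gstar m Q (fun a b => μ b a) := by
  unfold Hstar Gstar
  rw [iSup, iSup]
  congr 1
  ext r
  constructor
  · rintro ⟨V, rfl⟩
    refine ⟨fun y x => V x y, ?_⟩
    show (∑ y, ∑ x, μ (some x) (some y) * V x y) - Gfun m Q (fun y x => V x y)
      = (∑ x, ∑ y, μ (some x) (some y) * V x y) - Hfun m Q V
    rw [Finset.sum_comm]
    rfl
  · rintro ⟨W, rfl⟩
    refine ⟨fun x y => W y x, ?_⟩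
    show (∑ x, ∑ y, μ (some x) (some y) * W y x) - Hfun m Q (fun x y => W y x)
      = (∑ y, ∑ x, μ (some x) (some y) * W y x) - Gfun m Q W
    rw [Finset.sum_comm]
    rfl

/-- Under market clearing, the unobserved part of the social surplus
`−G*(μ) − H*(μ)` equals the sum of the expected error terms of the chosen
alternatives. -/
theorem stmt10
    (n : X → ℝ) (m : Y → ℝ) (hn : ∀ x, 0 < n x) (hm : ∀ y, 0 < m y)
    (P : X → Measure (Option Y → ℝ)) (Q : Y → Measure (Option X → ℝ))
    [∀ x, IsProbabilityMeasure (P x)] [∀ y, IsProbabilityMeasure (Q y)]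
    (hPac : ∀ x, P x ≪ (volume : Measure (Option Y → ℝ)))
    (hPpos : ∀ x, (volume : Measure (Option Y → ℝ)) ≪ P x)
    (hQac : ∀ y, Q y ≪ (volume : Measure (Option X → ℝ)))
    (hQpos : ∀ y, (volume : Measure (Option X → ℝ)) ≪ Q y)
    (hPint : ∀ x, Integrable (fun ε : Option Y → ℝ =>
      Finset.univ.sup' Finset.univ_nonempty fun a => |ε a|) (P x))
    (hQint : ∀ y, Integrable (fun η : Option X → ℝ =>
      Finset.univ.sup' Finset.univ_nonempty fun a => |η a|) (Q y))
    (U V : X → Y → ℝ) (μ : Option X → Option Y → ℝ)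
    (hμ : MarketClearing n m P Q μ U V)
    -- `Ystar x` is the (`P_x`-a.s. unique) maximizer selection of `y ↦ Û_{xy} + ε_y`
    (Ystar : X → (Option Y → ℝ) → Option Y)
    (hYstar : ∀ x, ∀ᵐ ε ∂(P x), ∀ y : Option Y,
      Uhat U x y + ε y ≤ Uhat U x (Ystar x ε) + ε (Ystar x ε))
    -- `Xstar y` is the (`Q_y`-a.s. unique) maximizer selection of `x ↦ V̂_{xy} + η_x`
    (Xstar : Y → (Option X → ℝ) → Option X)
    (hXstar : ∀ y, ∀ᵐ η ∂(Q y), ∀ x : Option X,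
      Vhat V y x + η x ≤ Vhat V y (Xstar y η) + η (Xstar y η)) :
    -Gstar n P μ - Hstar m Q μ =
      ∑ x, n x * ∫ ε, ε (Ystar x ε) ∂(P x) +
      ∑ y, m y * ∫ η, η (Xstar y η) ∂(Q y) := by
  obtain ⟨hμ1, hμ2, hμ3⟩ := hμ
  have hG := Gstar_side n (fun x => (hn x).le) P hPac hPint U μ
    (fun x y => (hμ1 x y).1) Ystar hYstar
  have hH : -Hstar m Q μ = ∑ y, m y * ∫ η, η (Xstar y η) ∂(Q y) := by
    rw [Hstar_eq_Gstar]
    exact Gstar_side m (fun y => (hm y).le) Q hQac hQint (fun y x => V x y)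
      (fun a b => μ b a) (fun y x => (hμ1 x y).2) Xstar hXstar
  linarith [hG, hH]

end
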